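/- (Case i = n+1) For 0 ≤ s < n, D_{n+1}(Q_{n,s}) = (-1)^n Q_{n,0} (−Q_{n,s-1}^p + Q_{n,n-1}^p Q_{n,s}), with the convention Q_{n,-1} = 0. -/

import Mathlib

open MvPolynomial Matrix Finset

/-- `[e₁,…,eₙ]`: the determinant of the matrix with `(k,j)`-entry `x_j^{p^{e_k}}`. -/
noncomputable def bracket (p n : ℕ) (e : Fin n → ℕ) : MvPolynomial (Fin n) (ZMod p) :=
  (Matrix.of fun k j : Fin n => (X j : MvPolynomial (Fin n) (ZMod p)) ^ p ^ (e k)).det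

/-- `L_n = [0,1,…,n-1]`. -/
noncomputable def Ln (p n : ℕ) : MvPolynomial (Fin n) (ZMod p) :=
  bracket p n (fun k => (k : ℕ))

/-- `L_{n,s} = [0,1,…,ŝ,…,n]` (entry `s` omitted from `0,…,n`). -/
noncomputable def Lns (p n s : ℕ) : MvPolynomial (Fin n) (ZMod p) :=
  bracket p n (fun k => if (k : ℕ) < s then (k : ℕ) else (k : ℕ) + 1)

/-- The `i`-th primitive Steenrod–Milnor operation, as the `F_p`-derivation
with `D_i(x_j) = x_j^{p^i}`. -/
noncomputable def Dop (p n i : ℕ) :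
    Derivation (ZMod p) (MvPolynomial (Fin n) (ZMod p)) (MvPolynomial (Fin n) (ZMod p)) :=
  MvPolynomial.mkDerivation (ZMod p) (fun j : Fin n => (X j) ^ p ^ i)

/-- The action of a matrix `g` on `P_n` by linear substitution of the variables. -/
noncomputable def act (p n : ℕ) (g : Matrix (Fin n) (Fin n) (ZMod p)) :
    MvPolynomial (Fin n) (ZMod p) →ₐ[ZMod p] MvPolynomial (Fin n) (ZMod p) :=
  MvPolynomial.aeval (fun j : Fin n => ∑ k : Fin n, g j k • (X k : MvPolynomial (Fin n) (ZMod p)))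

/-! ### Auxiliary lemmas -/

lemma derivation_finset_prod {R A : Type*} [CommRing R] [CommRing A] [Algebra R A]
    (D : Derivation R A A) {ι : Type*} [DecidableEq ι] (s : Finset ι) (f : ι → A) :
    D (∏ i ∈ s, f i) = ∑ i ∈ s, (∏ j ∈ s.erase i, f j) * D (f i) := by
  classical
  induction s using Finset.induction_on with
  | empty => simp
  | @insert a s ha ih =>
    rw [Finset.prod_insert ha, D.leibniz, smul_eq_mul, smul_eq_mul, ih, Finset.mul_sum,
      Finset.sum_insert ha, Finset.erase_insert ha]
    have hsum : ∀ x ∈ s, f a * ((∏ j ∈ s.erase x, f j) * D (f x))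
        = (∏ j ∈ (insert a s).erase x, f j) * D (f x) := fun x hx => by
      rw [Finset.erase_insert_of_ne (by rintro rfl; exact ha hx),
        Finset.prod_insert (fun h => ha (Finset.mem_of_mem_erase h))]
      ring
    rw [Finset.sum_congr rfl hsum]
    ring

lemma deriv_zsmul_units {R A : Type*} [CommRing R] [CommRing A] [Algebra R A]
    (D : Derivation R A A) (u : ℤˣ) (f : A) : D (u • f) = u • D f := by
  rcases Int.units_eq_one_or u with h | h <;> subst h <;>
    simp [Units.neg_smul, one_smul]

lemma deriv_X_pow (p n i : ℕ) [Fact p.Prime] (j : Fin n) (e : ℕ) :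
    Dop p n i ((X j : MvPolynomial (Fin n) (ZMod p)) ^ p ^ e) =
      if e = 0 then (X j) ^ p ^ i else 0 := by
  rcases e with _ | e
  · simp [Dop, mkDerivation_X]
  · rw [if_neg (Nat.succ_ne_zero e), Derivation.leibniz_pow, nsmul_eq_mul, Nat.cast_pow,
      CharP.cast_eq_zero (MvPolynomial (Fin n) (ZMod p)) p, zero_pow (Nat.succ_ne_zero e),
      zero_mul]

lemma bracket_succ (p n : ℕ) [Fact p.Prime] (e : Fin n → ℕ) :
    bracket p n (fun k => e k + 1) = (bracket p n e) ^ p := by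
  have hM : (Matrix.of fun k j : Fin n =>
      (X j : MvPolynomial (Fin n) (ZMod p)) ^ p ^ (e k + 1))
      = ((Matrix.of fun k j : Fin n =>
        (X j : MvPolynomial (Fin n) (ZMod p)) ^ p ^ (e k)).map
          (frobenius (MvPolynomial (Fin n) (ZMod p)) p)) := by
    ext k j
    simp only [Matrix.map_apply, Matrix.of_apply, frobenius_def, ← pow_mul, pow_succ]
  rw [bracket, bracket, hM, ← RingHom.mapMatrix_apply, ← RingHom.map_det, frobenius_def]

lemma bracket_deriv (p n i : ℕ) [Fact p.Prime] (e : Fin n → ℕ) (k₀ : Fin n)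
    (h0 : e k₀ = 0) (h1 : ∀ k, k ≠ k₀ → e k ≠ 0) :
    Dop p n i (bracket p n e) = bracket p n (Function.update e k₀ i) := by
  classical
  have hdet : ∀ f : Fin n → ℕ, bracket p n f
      = ∑ σ : Equiv.Perm (Fin n), Equiv.Perm.sign σ •
          ∏ j, (X (σ j) : MvPolynomial (Fin n) (ZMod p)) ^ p ^ f j := by
    intro f
    rw [bracket, ← Matrix.det_transpose, Matrix.det_apply]
    rfl
  rw [hdet, hdet, map_sum]
  refine Finset.sum_congr rfl fun σ _ => ?_
  rw [deriv_zsmul_units]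
  congr 1
  rw [derivation_finset_prod]
  rw [Finset.sum_eq_single_of_mem k₀ (Finset.mem_univ k₀) (fun j _ hj => by
      rw [deriv_X_pow, if_neg (h1 j hj), mul_zero])]
  rw [deriv_X_pow, if_pos h0, ← Finset.mul_prod_erase Finset.univ _ (Finset.mem_univ k₀),
      Function.update_self, mul_comm]
  congr 1
  exact Finset.prod_congr rfl fun j hj => by
    rw [Function.update_of_ne (Finset.ne_of_mem_erase hj)]

lemma bracket_comp_perm (p n : ℕ) (e : Fin n → ℕ) (σ : Equiv.Perm (Fin n)) :
    bracket p n (e ∘ σ) =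
      ((Equiv.Perm.sign σ : ℤ) : MvPolynomial (Fin n) (ZMod p)) * bracket p n e := by
  have : (Matrix.of fun k j : Fin n =>
      (X j : MvPolynomial (Fin n) (ZMod p)) ^ p ^ ((e ∘ σ) k))
      = (Matrix.of fun k j : Fin n =>
        (X j : MvPolynomial (Fin n) (ZMod p)) ^ p ^ (e k)).submatrix σ id := rfl
  rw [bracket, this, Matrix.det_permute, bracket]

lemma Ln_eq_Lns (p n : ℕ) : Ln p n = Lns p n n := by
  rw [Ln, Lns]
  congr 1
  funext k
  rw [if_pos k.isLt]

lemma Dop_Lns (p n : ℕ) [Fact p.Prime] (s : ℕ) (h1 : 1 ≤ s) (h2 : s ≤ n) :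
    Dop p n (n + 1) (Lns p n s) =
      (-1 : MvPolynomial (Fin n) (ZMod p)) ^ (n - 1) * (Lns p n (s - 1)) ^ p := by
  obtain ⟨m, rfl⟩ : ∃ m, n = m + 1 := ⟨n - 1, by omega⟩
  set e : Fin (m+1) → ℕ := fun k => if (k : ℕ) < s then (k : ℕ) else (k : ℕ) + 1 with he
  have h0 : e 0 = 0 := by
    simp only [he, Fin.val_zero]
    simp [show (0:ℕ) < s by omega]
  have hne : ∀ k, k ≠ (0 : Fin (m+1)) → e k ≠ 0 := by
    intro k hk
    have hv : (k : ℕ) ≠ 0 := fun h => hk (Fin.ext h)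
    simp only [he]
    split_ifs <;> omega
  have hD : Dop p (m+1) (m+1+1) (Lns p (m+1) s)
      = bracket p (m+1) (Function.update e 0 (m+1+1)) := by
    rw [Lns]
    exact bracket_deriv p (m+1) (m+1+1) e 0 h0 hne
  set f : Fin (m+1) → ℕ := fun k => (if (k:ℕ) < s - 1 then (k:ℕ) else (k:ℕ) + 1) + 1 with hf
  have hcomp : (Function.update e 0 (m+1+1)) ∘ (finRotate (m+1)) = f := by
    funext k
    simp only [Function.comp_apply, finRotate_succ_apply, hf]
    rcases eq_or_ne k (Fin.last m) with hk | hk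
    · subst hk
      rw [Fin.last_add_one, Function.update_self, Fin.val_last,
        if_neg (by omega)]
    · skip
      have hval : ((k + 1 : Fin (m+1)) : ℕ) = (k : ℕ) + 1 := by
        rw [Fin.val_add_one, if_neg hk]
      have hne0 : (k + 1 : Fin (m+1)) ≠ 0 := by
        intro h
        have h2 := congrArg Fin.val h
        rw [hval] at h2
        simp at h2
      rw [Function.update_of_ne hne0, he]
      simp only [hval]
      have hkm : (k:ℕ) < m := by
        have h3 := Nat.lt_succ_iff.mp k.isLt
        rcases lt_or_eq_of_le h3 with h | h
        · exact h
        · exact absurd (Fin.ext (by simpa [Fin.val_last] using h)) hk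
      split_ifs <;> omega
  have hperm := bracket_comp_perm p (m+1) (Function.update e 0 (m+1+1)) (finRotate (m+1))
  rw [hcomp] at hperm
  have hsign : ((Equiv.Perm.sign (finRotate (m+1)) : ℤ) : MvPolynomial (Fin (m+1)) (ZMod p))
      = (-1 : MvPolynomial (Fin (m+1)) (ZMod p)) ^ m := by
    rw [sign_finRotate]
    push_cast
    ring
  rw [hsign] at hperm
  have hsq : ((-1 : MvPolynomial (Fin (m+1)) (ZMod p)) ^ m) * ((-1 : MvPolynomial (Fin (m+1)) (ZMod p)) ^ m) = 1 := by
    rw [← pow_add]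
    exact Even.neg_one_pow ⟨m, rfl⟩
  have hinv : bracket p (m+1) (Function.update e 0 (m+1+1))
      = (-1 : MvPolynomial (Fin (m+1)) (ZMod p)) ^ m * bracket p (m+1) f := by
    rw [hperm, ← mul_assoc, hsq, one_mul]
  have hfp : bracket p (m+1) f = (Lns p (m+1) (s-1)) ^ p := by
    rw [Lns]
    exact bracket_succ p (m+1) _
  rw [hD, hinv, hfp, Nat.add_sub_cancel]

lemma Lns_zero (p n : ℕ) [Fact p.Prime] : Lns p n 0 = (Ln p n) ^ p := by
  rw [Lns, Ln,
    show (fun k : Fin n => if (k : ℕ) < 0 then (k : ℕ) else (k : ℕ) + 1)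
      = fun k : Fin n => (k : ℕ) + 1 from funext fun k => if_neg (by omega)]
  exact bracket_succ p n _

lemma Dop_pow_p (p n i : ℕ) [Fact p.Prime] (f : MvPolynomial (Fin n) (ZMod p)) :
    Dop p n i (f ^ p) = 0 := by
  have hp : p ≠ 0 := (Fact.out : p.Prime).ne_zero
  rw [Derivation.leibniz_pow, nsmul_eq_mul,
    CharP.cast_eq_zero (MvPolynomial (Fin n) (ZMod p)) p, zero_mul]

lemma Ln_ne_zero (p n : ℕ) [Fact p.Prime] : Ln p n ≠ 0 := by
  classical
  have hp : 1 < p := (Fact.out : p.Prime).one_lt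
  set m₀ : Fin n →₀ ℕ := Finsupp.equivFunOnFinite.symm (fun j : Fin n => p ^ (j : ℕ)) with hm₀
  have key : ∀ σ : Equiv.Perm (Fin n),
      MvPolynomial.coeff m₀ ((Equiv.Perm.sign σ) •
        ∏ i, ((X i : MvPolynomial (Fin n) (ZMod p)) ^ p ^ ((σ i : ℕ))))
        = if σ = 1 then 1 else 0 := by
    intro σ
    set mσ : Fin n →₀ ℕ := Finsupp.equivFunOnFinite.symm (fun j : Fin n => p ^ ((σ j : ℕ))) with hmσ
    have hsupp : mσ.support = Finset.univ := by
      refine Finset.eq_univ_iff_forall.2 fun j => ?_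
      rw [Finsupp.mem_support_iff]
      show p ^ ((σ j : ℕ)) ≠ 0
      positivity
    have hprod : (∏ i, ((X i : MvPolynomial (Fin n) (ZMod p)) ^ p ^ ((σ i : ℕ))))
        = MvPolynomial.monomial mσ 1 := by
      rw [← MvPolynomial.prod_X_pow_eq_monomial, hsupp]
      exact Finset.prod_congr rfl fun j _ => by
        rfl
    have hiff : mσ = m₀ ↔ σ = 1 := by
      constructor
      · intro h
        ext i : 1
        have h2 : p ^ ((σ i : ℕ)) = p ^ ((i : ℕ)) := by
          have := congrArg (fun g => g i) (congrArg DFunLike.coe h)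
          simpa [hmσ, hm₀] using this
        exact Fin.ext (Nat.pow_right_injective hp h2)
      · rintro rfl
        rfl
    rcases Int.units_eq_one_or (Equiv.Perm.sign σ) with h | h <;> rw [h]
    · rw [one_smul, hprod, MvPolynomial.coeff_monomial]
      by_cases h1 : σ = 1
      · rw [if_pos (hiff.2 h1), if_pos h1]
      · rw [if_neg (fun hh => h1 (hiff.1 hh)), if_neg h1]
    · have hσ1 : σ ≠ 1 := by
        rintro rfl
        rw [Equiv.Perm.sign_one] at h
        exact absurd h (by decide)
      rw [if_neg hσ1, Units.neg_smul, one_smul, hprod]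
      rw [show -(MvPolynomial.monomial mσ (1 : ZMod p)) = MvPolynomial.monomial mσ (-1 : ZMod p) by
        rw [← map_neg]]
      rw [MvPolynomial.coeff_monomial, if_neg (fun hh => hσ1 (hiff.1 hh))]
  intro h0
  have hc : MvPolynomial.coeff m₀ (Ln p n) = 1 := by
    rw [Ln, bracket, Matrix.det_apply]
    simp only [Matrix.of_apply]
    rw [MvPolynomial.coeff_sum]
    rw [Finset.sum_congr rfl (fun σ _ => key σ)]
    simp
  rw [h0] at hc
  simp at hc

theorem stmt11 (p n : ℕ) [Fact p.Prime] (hn : 1 ≤ n)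
    (Q : ℤ → MvPolynomial (Fin n) (ZMod p))
    (hQneg : ∀ t : ℤ, t < 0 → Q t = 0)
    (hQ : ∀ s : ℕ, s < n → Lns p n s = Ln p n * Q s)
    (s : ℕ) (hs : s < n) :
    Dop p n (n + 1) (Q s) =
      (-1 : MvPolynomial (Fin n) (ZMod p)) ^ n * Q 0 *
        (-(Q ((s : ℤ) - 1)) ^ p + (Q ((n : ℤ) - 1)) ^ p * Q s) := by
  have hp0 : p ≠ 0 := (Fact.out : p.Prime).ne_zero
  have hLn0 : Ln p n * Q 0 = Ln p n ^ p := by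
    have h := hQ 0 (by omega)
    rw [Lns_zero] at h
    push_cast at h
    exact h.symm
  have hcn : ((n - 1 : ℕ) : ℤ) = (n : ℤ) - 1 := by omega
  have hDLn : Dop p n (n+1) (Ln p n)
      = (-1 : MvPolynomial (Fin n) (ZMod p)) ^ (n-1) * (Ln p n * Q ((n:ℤ)-1)) ^ p := by
    rw [show Dop p n (n+1) (Ln p n) = Dop p n (n+1) (Lns p n n) by rw [← Ln_eq_Lns],
      Dop_Lns p n n hn le_rfl, hQ (n-1) (by omega), hcn]
  have hDLs : Dop p n (n+1) (Lns p n s)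
      = (-1 : MvPolynomial (Fin n) (ZMod p)) ^ (n-1) * (Ln p n * Q ((s:ℤ)-1)) ^ p := by
    rcases Nat.eq_zero_or_pos s with rfl | hs1
    · rw [Lns_zero, Dop_pow_p]
      rw [hQneg (((0:ℕ):ℤ) - 1) (by omega), mul_zero, zero_pow hp0, mul_zero]
    · have hcs : ((s - 1 : ℕ) : ℤ) = (s : ℤ) - 1 := by omega
      rw [Dop_Lns p n s hs1 (le_of_lt hs), hQ (s-1) (by omega), hcs]
  have hlei := (Dop p n (n+1)).leibniz (Ln p n) (Q s)
  rw [← hQ s hs, hDLs, hDLn] at hlei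
  simp only [smul_eq_mul] at hlei
  apply mul_left_cancel₀ (Ln_ne_zero p n)
  obtain ⟨m, rfl⟩ : ∃ m, n = m + 1 := ⟨n - 1, by omega⟩
  simp only [Nat.add_sub_cancel] at hlei
  rw [mul_pow, mul_pow, ← hLn0] at hlei
  linear_combination -hlei
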